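/- Fix R > 0 and δ > 1, and define u_{R,δ} : ℝ² → ℝ by u_{R,δ}(x) = 0 for |x| > R, u_{R,δ}(x) = (1/√(2π)) log(R/|x|)/√(log δ) for R/δ ≤ |x| ≤ R, and u_{R,δ}(x) = (1/√(2π)) √(log δ) for |x| ≤ R/δ. Then ‖∇u_{R,δ}‖_{L²(ℝ²)} = 1 and, with T := πR², sup_{0 < t ≤ T} (u_{R,δ}*(t) − u_{R,δ}*(T)) / √(log(T/t)) = 1/√(4π). -/

import Mathlib

open MeasureTheory Real Metric

/-- The decreasing rearrangement of a function on `ℝ²`. -/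
noncomputable def decRearr (u : EuclideanSpace ℝ (Fin 2) → ℝ) (t : ℝ) : ℝ :=
  sInf {s : ℝ | 0 ≤ s ∧ volume {x : EuclideanSpace ℝ (Fin 2) | s < |u x|} ≤ ENNReal.ofReal t}

private lemma volume_ball2 {r : ℝ} (hr : 0 ≤ r) :
    volume (Metric.ball (0 : EuclideanSpace ℝ (Fin 2)) r) = ENNReal.ofReal (π * r ^ 2) := by
  rw [EuclideanSpace.volume_ball]
  simp only [Fintype.card_fin]
  rw [show ((2:ℕ):ℝ)/2 + 1 = 2 by norm_num, Real.Gamma_two, Real.sq_sqrt pi_nonneg,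
    div_one, ← ENNReal.ofReal_pow hr, ← ENNReal.ofReal_mul (by positivity), mul_comm]

private lemma levelset {R δ c : ℝ} (hR : 0 < R) (hδ : 1 < δ) (hc : 0 < c)
    {u : EuclideanSpace ℝ (Fin 2) → ℝ}
    (hu' : ∀ x, u x = if ‖x‖ ≤ R/δ then c * Real.log δ
      else if ‖x‖ ≤ R then c * Real.log (R/‖x‖) else 0)
    {s : ℝ} (hs : 0 ≤ s) (hsM : s < c * Real.log δ) :
    {x : EuclideanSpace ℝ (Fin 2) | s < |u x|} = Metric.ball 0 (R * Real.exp (-(s/c))) := by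
  have hδ0 : (0:ℝ) < δ := lt_trans one_pos hδ
  have hlogδ : 0 < Real.log δ := Real.log_pos hδ
  have hρR : R * Real.exp (-(s/c)) ≤ R := by
    nlinarith [Real.exp_le_one_iff.2 (neg_nonpos.2 (by positivity) : -(s/c) ≤ 0),
      Real.exp_pos (-(s/c))]
  have hρδ : R / δ < R * Real.exp (-(s/c)) := by
    rw [div_lt_iff₀ hδ0]
    have h1 : Real.exp (-(c * Real.log δ / c)) < Real.exp (-(s/c)) := by
      apply Real.exp_lt_exp.2
      rw [neg_lt_neg_iff, div_lt_div_iff_of_pos_right hc]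
      exact hsM
    rw [mul_div_cancel_left₀ _ hc.ne', Real.exp_neg, Real.exp_log hδ0] at h1
    calc R = R * (δ⁻¹ * δ) := by field_simp
    _ < R * Real.exp (-(s/c)) * δ := by nlinarith [mul_pos (mul_pos hR hδ0) (sub_pos.2 h1)]
  ext x
  simp only [Set.mem_setOf_eq, mem_ball_zero_iff, hu' x]
  rcases le_or_gt ‖x‖ (R/δ) with h1 | h1
  · rw [if_pos h1]
    constructor
    · intro _; exact lt_of_le_of_lt h1 hρδ
    · intro _
      rw [abs_of_pos (mul_pos hc hlogδ)]
      exact hsM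
  · rw [if_neg (not_le.2 h1)]
    have hx0 : 0 < ‖x‖ := lt_trans (by positivity) h1
    rcases le_or_gt ‖x‖ R with h2 | h2
    · rw [if_pos h2]
      have hlog0 : 0 ≤ Real.log (R/‖x‖) :=
        Real.log_nonneg ((one_le_div hx0).2 h2)
      rw [abs_of_nonneg (by positivity)]
      constructor
      · intro h3
        have h4 : s / c < Real.log (R/‖x‖) := (div_lt_iff₀' hc).2 h3
        have h5 : Real.exp (s/c) < R / ‖x‖ :=
          (Real.lt_log_iff_exp_lt (by positivity)).1 h4
        rw [lt_div_iff₀ hx0] at h5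
        have key : Real.exp (s/c) * ‖x‖ * Real.exp (-(s/c)) = ‖x‖ := by
          rw [Real.exp_neg]; field_simp
        have := Real.exp_pos (-(s/c))
        nlinarith
      · intro h3
        have h5 : Real.exp (s/c) * ‖x‖ < R := by
          have h6 := Real.exp_pos (s/c)
          have : Real.exp (s/c) * (R * Real.exp (-(s/c))) = R := by
            rw [Real.exp_neg]; field_simp
          nlinarith
        have h4 : Real.exp (s/c) < R / ‖x‖ := (lt_div_iff₀ hx0).2 h5
        have h7 := (Real.lt_log_iff_exp_lt (by positivity)).2 h4
        exact (div_lt_iff₀' hc).1 h7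
    · rw [if_neg (not_le.2 h2)]
      simp only [abs_zero]
      constructor
      · intro h3; exact absurd h3 (not_lt.2 hs)
      · intro h3; exact absurd (lt_of_le_of_lt hρR h2) (not_lt.2 h3.le)

private lemma levelset_empty {R δ c : ℝ} (hR : 0 < R) (hδ : 1 < δ) (hc : 0 < c)
    {u : EuclideanSpace ℝ (Fin 2) → ℝ}
    (hu' : ∀ x, u x = if ‖x‖ ≤ R/δ then c * Real.log δ
      else if ‖x‖ ≤ R then c * Real.log (R/‖x‖) else 0)
    {s : ℝ} (hs : c * Real.log δ ≤ s) :
    {x : EuclideanSpace ℝ (Fin 2) | s < |u x|} = ∅ := by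
  have hδ0 : (0:ℝ) < δ := lt_trans one_pos hδ
  have hlogδ : 0 < Real.log δ := Real.log_pos hδ
  rw [Set.eq_empty_iff_forall_notMem]
  intro x hx
  simp only [Set.mem_setOf_eq, hu' x] at hx
  have hux : |if ‖x‖ ≤ R/δ then c * Real.log δ
      else if ‖x‖ ≤ R then c * Real.log (R/‖x‖) else 0| ≤ c * Real.log δ := by
    rcases le_or_gt ‖x‖ (R/δ) with h1 | h1
    · rw [if_pos h1, abs_of_pos (mul_pos hc hlogδ)]
    · rw [if_neg (not_le.2 h1)]
      have hx0 : 0 < ‖x‖ := lt_trans (by positivity) h1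
      rcases le_or_gt ‖x‖ R with h2 | h2
      · rw [if_pos h2]
        have hlog0 : 0 ≤ Real.log (R/‖x‖) := Real.log_nonneg ((one_le_div hx0).2 h2)
        rw [abs_of_nonneg (by positivity)]
        have : Real.log (R/‖x‖) ≤ Real.log δ := by
          apply Real.log_le_log (by positivity)
          rw [div_le_iff₀ hx0]
          rw [div_lt_iff₀ hδ0] at h1
          linarith
        nlinarith
      · rw [if_neg (not_le.2 h2), abs_zero]
        positivity
  linarith

private lemma decRearr_eq {R δ c T : ℝ} (hR : 0 < R) (hδ : 1 < δ) (hc : 0 < c)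
    {u : EuclideanSpace ℝ (Fin 2) → ℝ}
    (hu' : ∀ x, u x = if ‖x‖ ≤ R/δ then c * Real.log δ
      else if ‖x‖ ≤ R then c * Real.log (R/‖x‖) else 0)
    (hT : T = π * R ^ 2) {t : ℝ} (ht : 0 < t) (ht' : t ≤ T) :
    decRearr u t = min (c * Real.log δ) (c/2 * Real.log (T/t)) := by
  have hT0 : 0 < T := hT ▸ by positivity
  have hlogδ : 0 < Real.log δ := Real.log_pos hδ
  have hL : 0 ≤ Real.log (T/t) := Real.log_nonneg ((one_le_div ht).2 ht')
  set M := c * Real.log δ with hM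
  set s₀ := min M (c/2 * Real.log (T/t)) with hs₀
  have hs₀0 : 0 ≤ s₀ := le_min (by positivity) (by positivity)
  have hs₀M : s₀ ≤ M := min_le_left _ _
  have key : ∀ s, 0 ≤ s → s < M →
      (volume {x : EuclideanSpace ℝ (Fin 2) | s < |u x|} ≤ ENNReal.ofReal t ↔
        c/2 * Real.log (T/t) ≤ s) := by
    intro s hs hsM
    rw [levelset hR hδ hc hu' hs hsM, volume_ball2 (by positivity),
      ENNReal.ofReal_le_ofReal_iff ht.le]
    have hexp : π * (R * Real.exp (-(s/c)))^2 = T * Real.exp (-(2*s)/c) := by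
      rw [hT, mul_pow, pow_two (Real.exp _), ← Real.exp_add]
      ring_nf
    rw [hexp, ← le_div_iff₀' hT0, ← Real.le_log_iff_exp_le (div_pos ht hT0),
      Real.log_div ht.ne' hT0.ne', Real.log_div hT0.ne' ht.ne', div_le_iff₀ hc]
    constructor <;> intro h <;> nlinarith
  have hset : {s : ℝ | 0 ≤ s ∧
      volume {x : EuclideanSpace ℝ (Fin 2) | s < |u x|} ≤ ENNReal.ofReal t} = Set.Ici s₀ := by
    ext s
    simp only [Set.mem_setOf_eq, Set.mem_Ici]
    constructor
    · rintro ⟨hsn, hvol⟩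
      by_contra hlt
      push_neg at hlt
      have hsM : s < M := lt_of_lt_of_le hlt hs₀M
      have h2 := (key s hsn hsM).1 hvol
      have h3 := min_le_right M (c/2 * Real.log (T/t))
      linarith [lt_of_lt_of_le hlt h3]
    · intro hss
      refine ⟨le_trans hs₀0 hss, ?_⟩
      rcases le_or_gt M s with h | h
      · rw [levelset_empty hR hδ hc hu' h]
        simp
      · have hcle : c/2 * Real.log (T/t) ≤ s := by
          by_contra hcon
          push_neg at hcon
          have : s < s₀ := lt_min h hcon
          linarith
        exact (key s (le_trans hs₀0 hss) h).2 hcle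
  unfold decRearr
  rw [hset, csInf_Ici]

private lemma sup_eq {R δ c T : ℝ} (hR : 0 < R) (hδ : 1 < δ)
    (hcdef : c = 1 / (Real.sqrt (2*π) * Real.sqrt (Real.log δ)))
    {u : EuclideanSpace ℝ (Fin 2) → ℝ}
    (hu' : ∀ x, u x = if ‖x‖ ≤ R/δ then c * Real.log δ
      else if ‖x‖ ≤ R then c * Real.log (R/‖x‖) else 0)
    (hT : T = π * R ^ 2) :
    sSup {y : ℝ | ∃ t : ℝ, 0 < t ∧ t ≤ T ∧
        y = (decRearr u t - decRearr u T) / Real.sqrt (Real.log (T / t))} =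
      1 / Real.sqrt (4 * π) := by
  have hT0 : 0 < T := hT ▸ by positivity
  have hlogδ : 0 < Real.log δ := Real.log_pos hδ
  have hc : 0 < c := by rw [hcdef]; positivity
  have hc2 : c ^ 2 = 1 / (2 * π * Real.log δ) := by
    rw [hcdef, div_pow, mul_pow, Real.sq_sqrt (by positivity), Real.sq_sqrt hlogδ.le]
    norm_num
  have hM : (0:ℝ) < c * Real.log δ := mul_pos hc hlogδ
  have hdT : decRearr u T = 0 := by
    rw [decRearr_eq hR hδ hc hu' hT hT0 le_rfl, div_self hT0.ne', Real.log_one, mul_zero,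
      min_eq_right hM.le]
  have hB : Real.sqrt ((c * Real.log δ) * (c/2)) = 1 / Real.sqrt (4*π) := by
    have h : (c * Real.log δ) * (c/2) = 1 / (4*π) := by
      have h2 : c * Real.log δ * (c/2) = c^2 * Real.log δ / 2 := by ring
      rw [h2, hc2]
      field_simp
      ring
    rw [h, one_div, Real.sqrt_inv, one_div]
  have hub : ∀ y ∈ {y : ℝ | ∃ t : ℝ, 0 < t ∧ t ≤ T ∧
      y = (decRearr u t - decRearr u T) / Real.sqrt (Real.log (T / t))},
      y ≤ 1 / Real.sqrt (4*π) := by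
    rintro y ⟨t, ht, ht', rfl⟩
    rw [decRearr_eq hR hδ hc hu' hT ht ht', hdT, sub_zero]
    have hL : 0 ≤ Real.log (T/t) := Real.log_nonneg ((one_le_div ht).2 ht')
    set L := Real.log (T/t) with hLdef
    rcases eq_or_lt_of_le hL with h0 | h0
    · rw [← h0, Real.sqrt_zero, div_zero]
      positivity
    · have hmn : 0 ≤ min (c * Real.log δ) (c/2 * L) :=
        le_min hM.le (by positivity)
      have h1 : min (c * Real.log δ) (c/2 * L) ≤
          Real.sqrt ((c * Real.log δ) * (c/2)) * Real.sqrt L := by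
        rw [← Real.sqrt_mul (by positivity),
          show c * Real.log δ * (c/2) * L = (c * Real.log δ) * (c/2 * L) by ring]
        apply Real.le_sqrt_of_sq_le
        nlinarith [min_le_left (c * Real.log δ) (c/2*L), min_le_right (c * Real.log δ) (c/2*L)]
      have hsL : 0 < Real.sqrt L := Real.sqrt_pos.2 h0
      calc min (c * Real.log δ) (c/2 * L) / Real.sqrt L
          ≤ Real.sqrt ((c * Real.log δ) * (c/2)) * Real.sqrt L / Real.sqrt L := by gcongr
        _ = Real.sqrt ((c * Real.log δ) * (c/2)) := by
            rw [mul_div_assoc, div_self hsL.ne', mul_one]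
        _ = 1 / Real.sqrt (4*π) := hB
  have hmem : 1 / Real.sqrt (4*π) ∈ {y : ℝ | ∃ t : ℝ, 0 < t ∧ t ≤ T ∧
      y = (decRearr u t - decRearr u T) / Real.sqrt (Real.log (T / t))} := by
    have hδ0 : (0:ℝ) < δ := lt_trans one_pos hδ
    refine ⟨T / δ^2, by positivity, ?_, ?_⟩
    · apply div_le_self hT0.le
      nlinarith
    · have hTt : T / (T / δ^2) = δ^2 := by
        field_simp
      rw [decRearr_eq hR hδ hc hu' hT (by positivity) (div_le_self hT0.le (by nlinarith)),
        hdT, sub_zero, hTt, Real.log_pow]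
      push_cast
      rw [show c/2 * (2 * Real.log δ) = c * Real.log δ by ring, min_self]
      rw [show (2:ℝ) * Real.log δ = (c * Real.log δ)^2 * (4 * π) by
        rw [mul_pow, hc2]
        field_simp
        ring]
      rw [Real.sqrt_mul (by positivity : (0:ℝ) ≤ (c * Real.log δ)^2) (4*π),
        Real.sqrt_sq hM.le, div_mul_cancel_left₀ hM.ne', one_div]
  exact le_antisymm (csSup_le ⟨_, hmem⟩ hub) (le_csSup ⟨_, hub⟩ hmem)

private lemma fderiv_sq_eq {R δ c : ℝ} (hR : 0 < R) (hδ : 1 < δ) (hc : 0 < c)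
    {u : EuclideanSpace ℝ (Fin 2) → ℝ}
    (hu' : ∀ x, u x = if ‖x‖ ≤ R/δ then c * Real.log δ
      else if ‖x‖ ≤ R then c * Real.log (R/‖x‖) else 0)
    (x : EuclideanSpace ℝ (Fin 2)) (h1 : ‖x‖ ≠ R/δ) (h2 : ‖x‖ ≠ R) :
    ‖fderiv ℝ u x‖^2 = (Set.Ioo (R/δ) R).indicator (fun r => c^2 / r^2) ‖x‖ := by
  have hδ0 : (0:ℝ) < δ := lt_trans one_pos hδ
  rcases lt_or_gt_of_ne h1 with hlt | hgt
  · -- inside the small ball: u is locally constant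
    have huv : u =ᶠ[nhds x] fun _ => c * Real.log δ := by
      filter_upwards [isOpen_ball.mem_nhds (mem_ball_zero_iff.2 hlt)] with y hy
      rw [hu' y, if_pos (mem_ball_zero_iff.1 hy).le]
    rw [huv.fderiv_eq, fderiv_fun_const,
      Set.indicator_of_notMem (fun h => absurd h.1 (not_lt.2 hlt.le))]
    simp
  rcases lt_trichotomy ‖x‖ R with hlt2 | heq | hgt2
  · -- annulus
    have hx0 : (0:ℝ) < ‖x‖ := lt_trans (by positivity) hgt
    have hn : HasFDerivAt (fun y : EuclideanSpace ℝ (Fin 2) => ‖y‖^2)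
        (2 • innerSL ℝ x) x := (hasStrictFDerivAt_norm_sq x).hasFDerivAt
    have hlog : HasFDerivAt (fun y : EuclideanSpace ℝ (Fin 2) => Real.log (‖y‖^2))
        ((‖x‖^2)⁻¹ • (2 • innerSL ℝ x)) x := hn.log (by positivity)
    have hv : HasFDerivAt (fun y : EuclideanSpace ℝ (Fin 2) =>
        c * Real.log R - c/2 * Real.log (‖y‖^2))
        (-((c/2) • ((‖x‖^2)⁻¹ • (2 • innerSL ℝ x)))) x :=
      (hlog.const_mul (c/2)).const_sub (c * Real.log R)
    have hopen : IsOpen {y : EuclideanSpace ℝ (Fin 2) | R/δ < ‖y‖ ∧ ‖y‖ < R} :=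
      (isOpen_lt continuous_const continuous_norm).inter
        (isOpen_lt continuous_norm continuous_const)
    have huv : u =ᶠ[nhds x] fun y => c * Real.log R - c/2 * Real.log (‖y‖^2) := by
      filter_upwards [hopen.mem_nhds ⟨hgt, hlt2⟩] with y hy
      have hy0 : (0:ℝ) < ‖y‖ := lt_trans (by positivity) hy.1
      rw [hu' y, if_neg (not_le.2 hy.1), if_pos hy.2.le,
        Real.log_div hR.ne' hy0.ne', Real.log_pow]
      push_cast
      ring
    rw [huv.fderiv_eq, hv.fderiv, Set.indicator_of_mem (Set.mem_Ioo.mpr ⟨hgt, hlt2⟩)]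
    rw [norm_neg, norm_smul, norm_smul]
    have h2s : (2:ℕ) • innerSL ℝ x = (2:ℝ) • innerSL ℝ x := by
      simp [two_smul]
    rw [h2s, norm_smul, innerSL_apply_norm]
    simp only [Real.norm_eq_abs, abs_of_pos (by positivity : (0:ℝ) < c/2),
      abs_of_pos (by positivity : (0:ℝ) < ((‖x‖:ℝ)^2)⁻¹), Real.norm_ofNat]
    field_simp
    ring
  · exact absurd heq h2
  · -- outside the big ball: u is locally zero
    have hopen : IsOpen {y : EuclideanSpace ℝ (Fin 2) | R < ‖y‖} :=
      isOpen_lt continuous_const continuous_norm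
    have huv : u =ᶠ[nhds x] fun _ => (0:ℝ) := by
      filter_upwards [hopen.mem_nhds hgt2] with y hy
      have : R/δ ≤ R := div_le_self hR.le hδ.le
      rw [hu' y, if_neg (not_le.2 (lt_of_le_of_lt this hy)), if_neg (not_le.2 hy)]
    rw [huv.fderiv_eq, fderiv_fun_const,
      Set.indicator_of_notMem (fun h => absurd h.2 (not_lt.2 hgt2.le))]
    simp

private lemma grad_int {R δ c : ℝ} (hR : 0 < R) (hδ : 1 < δ) (hc : 0 < c)
    {u : EuclideanSpace ℝ (Fin 2) → ℝ}
    (hu' : ∀ x, u x = if ‖x‖ ≤ R/δ then c * Real.log δ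
      else if ‖x‖ ≤ R then c * Real.log (R/‖x‖) else 0) :
    ∫ x : EuclideanSpace ℝ (Fin 2), ‖fderiv ℝ u x‖ ^ 2 ∂volume
      = 2 * π * (c^2 * Real.log δ) := by
  have hδ0 : (0:ℝ) < δ := lt_trans one_pos hδ
  set g : ℝ → ℝ := (Set.Ioo (R/δ) R).indicator (fun r => c^2 / r^2) with hg
  have hae : (fun x : EuclideanSpace ℝ (Fin 2) => ‖fderiv ℝ u x‖ ^ 2)
      =ᵐ[volume] (fun x => g ‖x‖) := by
    have s1 : volume {x : EuclideanSpace ℝ (Fin 2) | ‖x‖ = R/δ} = 0 := by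
      have := Measure.addHaar_sphere (volume : Measure (EuclideanSpace ℝ (Fin 2))) 0 (R/δ)
      simpa [sphere, dist_zero_right] using this
    have s2 : volume {x : EuclideanSpace ℝ (Fin 2) | ‖x‖ = R} = 0 := by
      have := Measure.addHaar_sphere (volume : Measure (EuclideanSpace ℝ (Fin 2))) 0 R
      simpa [sphere, dist_zero_right] using this
    have h1 : ∀ᵐ x : EuclideanSpace ℝ (Fin 2), ‖x‖ ≠ R/δ := by
      rw [ae_iff]; simpa using s1
    have h2 : ∀ᵐ x : EuclideanSpace ℝ (Fin 2), ‖x‖ ≠ R := by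
      rw [ae_iff]; simpa using s2
    filter_upwards [h1, h2] with x hx1 hx2
    exact fderiv_sq_eq hR hδ hc hu' x hx1 hx2
  rw [integral_congr_ae hae]
  have hpolar := integral_fun_norm_addHaar (volume : Measure (EuclideanSpace ℝ (Fin 2))) g
  rw [finrank_euclideanSpace_fin] at hpolar
  rw [hpolar, measureReal_def, volume_ball2 zero_le_one, nsmul_eq_mul, smul_eq_mul]
  have htr : (ENNReal.ofReal (π * 1^2)).toReal = π := by
    rw [one_pow, mul_one, ENNReal.toReal_ofReal pi_nonneg]
  rw [htr]
  have hind : (fun y : ℝ => y ^ (2-1) • g y)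
      = (Set.Ioo (R/δ) R).indicator (fun y => c^2 * y⁻¹) := by
    funext y
    by_cases h : y ∈ Set.Ioo (R/δ) R
    · have hy0 : (0:ℝ) < y := lt_trans (by positivity) h.1
      rw [hg]
      simp only [Set.indicator_of_mem h, pow_one, smul_eq_mul]
      field_simp
      ring
    · rw [hg]
      simp [Set.indicator_of_notMem h]
  rw [hind, integral_indicator measurableSet_Ioo,
    Measure.restrict_restrict measurableSet_Ioo,
    show Set.Ioo (R/δ) R ∩ Set.Ioi 0 = Set.Ioo (R/δ) R from
      Set.inter_eq_self_of_subset_left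
        (fun y hy => Set.mem_Ioi.mpr (lt_trans (by positivity) hy.1)),
    MeasureTheory.integral_const_mul]
  have hIoo : ∫ y in Set.Ioo (R/δ) R, y⁻¹ = Real.log δ := by
    rw [← integral_Ioc_eq_integral_Ioo,
      ← intervalIntegral.integral_of_le (le_of_lt ((div_lt_self hR hδ))),
      integral_inv_of_pos (by positivity) hR]
    congr 1
    field_simp
  rw [hIoo]
  ring

/-- The explicit Moser-type extremal `u_{R,δ}` has unit Dirichlet norm and attains
the best constant `1/√(4π)` in the Alvino-type inequality on `(0, T]`, `T = πR²`. -/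
theorem alvino_extremal
    (R δ : ℝ) (hR : 0 < R) (hδ : 1 < δ)
    (u : EuclideanSpace ℝ (Fin 2) → ℝ)
    (hu : ∀ x : EuclideanSpace ℝ (Fin 2),
      u x = if ‖x‖ ≤ R / δ then (1 / Real.sqrt (2 * π)) * Real.sqrt (Real.log δ)
        else if ‖x‖ ≤ R then
          (1 / Real.sqrt (2 * π)) * (Real.log (R / ‖x‖) / Real.sqrt (Real.log δ))
        else 0)
    (T : ℝ) (hT : T = π * R ^ 2) :
    Real.sqrt (∫ x : EuclideanSpace ℝ (Fin 2), ‖fderiv ℝ u x‖ ^ 2 ∂volume) = 1 ∧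
    sSup {y : ℝ | ∃ t : ℝ, 0 < t ∧ t ≤ T ∧
        y = (decRearr u t - decRearr u T) / Real.sqrt (Real.log (T / t))} =
      1 / Real.sqrt (4 * π) := by
  have hlogδ : 0 < Real.log δ := Real.log_pos hδ
  set c : ℝ := 1 / (Real.sqrt (2*π) * Real.sqrt (Real.log δ)) with hcdef
  have hc : 0 < c := by rw [hcdef]; positivity
  have hu' : ∀ x : EuclideanSpace ℝ (Fin 2),
      u x = if ‖x‖ ≤ R/δ then c * Real.log δ
        else if ‖x‖ ≤ R then c * Real.log (R/‖x‖) else 0 := by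
    intro x
    rw [hu x]
    by_cases hx1 : ‖x‖ ≤ R/δ
    · rw [if_pos hx1, if_pos hx1, hcdef,
        show 1 / (Real.sqrt (2*π) * Real.sqrt (Real.log δ)) * Real.log δ
          = 1 / Real.sqrt (2*π) * (Real.log δ / Real.sqrt (Real.log δ)) by ring,
        Real.div_sqrt]
    · rw [if_neg hx1, if_neg hx1]
      by_cases hx2 : ‖x‖ ≤ R
      · rw [if_pos hx2, if_pos hx2, hcdef]
        ring
      · rw [if_neg hx2, if_neg hx2]
  constructor
  · rw [grad_int hR hδ hc hu']
    have hc2 : c ^ 2 = 1 / (2 * π * Real.log δ) := by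
      rw [hcdef, div_pow, mul_pow, Real.sq_sqrt (by positivity), Real.sq_sqrt hlogδ.le]
      norm_num
    have h1 : 2 * π * (c^2 * Real.log δ) = 1 := by
      rw [hc2]
      field_simp
    rw [h1, Real.sqrt_one]
  · exact sup_eq hR hδ hcdef hu' hT
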